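/- If C ⊆ X^n is a perfect distance-3 code (equivalently, a code of minimum distance 3 and cardinality 2^{n-1}, so that the radius-1 balls around codewords partition X^n), then n = 2^m for some integer m ≥ 2. -/

import Mathlib

/-- Ternary words of length `n` over `{0,1,*}`, with `none` playing the role of `*`. -/
abbrev TW (n : ℕ) := Fin n → Option (ZMod 2)

/-- Membership in `X^n`: exactly one coordinate equals `*`. -/
def isX {n : ℕ} (w : TW n) : Prop := (Finset.univ.filter (fun i => w i = none)).card = 1

namespace Stmt6Aux

variable {n : ℕ}

/-- w lies in page p: its unique star is at p. -/
def Pg (p : Fin n) (w : TW n) : Prop := ∀ i, w i = none ↔ i = p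

instance (p : Fin n) : DecidablePred (Pg p) := fun _ => by unfold Pg; infer_instance

lemma isX_iff {w : TW n} : isX w ↔ ∃ p, Pg p w := by
  unfold isX Pg
  rw [Finset.card_eq_one]
  constructor
  · rintro ⟨p, hp⟩
    refine ⟨p, fun i => ?_⟩
    have := Finset.ext_iff.1 hp i
    simpa using this
  · rintro ⟨p, hp⟩
    exact ⟨p, by ext i; simp [hp i]⟩

/-- the page as a finset -/
def page (p : Fin n) : Finset (TW n) := Finset.univ.filter (Pg p)

lemma page_card (p : Fin n) : (page p).card = 2 ^ (n - 1) := by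
  have h : (page p).card = (Finset.univ : Finset ({i : Fin n // i ≠ p} → ZMod 2)).card := by
    apply Finset.card_nbij' (i := fun w k => (w k.1).getD 0)
      (j := fun u => fun i => if h : i = p then none else some (u ⟨i, h⟩))
    · intro a _; simp
    · intro u _
      simp only [page, Finset.mem_coe, Finset.mem_filter, Finset.mem_univ, true_and]
      intro i
      constructor
      · intro hi
        by_contra h
        simp [h] at hi
      · rintro rfl; simp
    · intro w hw
      simp only [page, Finset.mem_coe, Finset.mem_filter, Finset.mem_univ, true_and] at hw
      funext i
      by_cases h : i = p
      · beta_reduce; rw [dif_pos h, h, ((hw p).2 rfl)]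
      · have : w i ≠ none := fun hn => h ((hw i).1 hn)
        obtain ⟨a, ha⟩ := Option.ne_none_iff_exists'.1 this
        simp [h, ha]
    · intro u _
      funext k
      simp [k.2]
  rw [h, Finset.card_univ, Fintype.card_fun]
  have : Fintype.card {i : Fin n // i ≠ p} = n - 1 := by
    rw [Fintype.card_subtype_compl, Fintype.card_subtype_eq, Fintype.card_fin]
  rw [this]
  norm_num

instance : DecidablePred (isX (n := n)) := fun _ => by unfold isX; infer_instance

lemma mem_page {p : Fin n} {w : TW n} : w ∈ page p ↔ Pg p w := by simp [page]

lemma page_isX {p : Fin n} {w : TW n} (h : w ∈ page p) : isX w :=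
  isX_iff.2 ⟨p, mem_page.1 h⟩

/-- the radius-1 ball around c, inside X. -/
def ball (c : TW n) : Finset (TW n) :=
  (Finset.univ.filter isX).filter (fun x => hammingDist c x ≤ 1)

lemma mem_ball {c x : TW n} : x ∈ ball c ↔ isX x ∧ hammingDist c x ≤ 1 := by
  simp [ball]

lemma ball_subset_page {p : Fin n} {c : TW n} (hc : c ∈ page p) : ball c ⊆ page p := by
  intro x hx
  obtain ⟨hxX, hdist⟩ := mem_ball.1 hx
  obtain ⟨q, hq⟩ := isX_iff.1 hxX
  have hcp : Pg p c := mem_page.1 hc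
  rcases eq_or_ne q p with rfl | hqp
  · exact mem_page.2 hq
  · exfalso
    have h1 : c p ≠ x p := by
      rw [(hcp p).2 rfl]
      intro h
      exact hqp ((hq p).1 h.symm).symm
    have h2 : c q ≠ x q := by
      rw [(hq q).2 rfl]
      intro h
      exact hqp ((hcp q).1 h)
    have hsub : ({p, q} : Finset (Fin n)) ⊆ Finset.univ.filter (fun i => c i ≠ x i) := by
      intro i hi
      simp only [Finset.mem_insert, Finset.mem_singleton] at hi
      rcases hi with rfl | rfl <;> simp [h1, h2]
    have hcard : 2 ≤ hammingDist c x := by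
      have := Finset.card_le_card hsub
      rwa [Finset.card_insert_of_notMem (by simpa using fun h => hqp h.symm),
        Finset.card_singleton] at this
    omega

/-- flip coordinate i of c -/
def flipAt (c : TW n) (i : Fin n) : TW n := Function.update c i ((c i).map (· + 1))

lemma zmod2_ne {a b : ZMod 2} (h : a ≠ b) : b = a + 1 := by revert h; revert a b; decide

lemma ball_eq {p : Fin n} {c : TW n} (hc : c ∈ page p) :
    ball c = insert c ((Finset.univ.filter (· ≠ p)).image (flipAt c)) := by
  have hcp : Pg p c := mem_page.1 hc
  ext x
  simp only [Finset.mem_insert, Finset.mem_image, Finset.mem_filter, Finset.mem_univ, true_and]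
  constructor
  · intro hx
    have hxp : x ∈ page p := ball_subset_page hc hx
    have hxPg : Pg p x := mem_page.1 hxp
    obtain ⟨-, hdist⟩ := mem_ball.1 hx
    rcases Nat.le_one_iff_eq_zero_or_eq_one.1 hdist with h0 | h1
    · left
      exact (hammingDist_eq_zero.1 h0).symm
    · right
      have : (Finset.univ.filter (fun i => c i ≠ x i)).card = 1 := h1
      obtain ⟨i, hi⟩ := Finset.card_eq_one.1 this
      have hmem : ∀ j, c j ≠ x j ↔ j = i := by
        intro j
        have := Finset.ext_iff.1 hi j
        simpa using this
      have hip : i ≠ p := by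
        intro h
        subst h
        exact (hmem i).2 rfl ((hcp i).2 rfl ▸ ((hxPg i).2 rfl) ▸ rfl)
      refine ⟨i, hip, ?_⟩
      funext j
      rcases eq_or_ne j i with rfl | hji
      · obtain ⟨a, ha⟩ := Option.ne_none_iff_exists'.1 (fun hn => hip ((hcp j).1 hn))
        obtain ⟨b, hb⟩ := Option.ne_none_iff_exists'.1 (fun hn => hip ((hxPg j).1 hn))
        have hab : a ≠ b := by
          intro h; exact (hmem j).2 rfl (by rw [ha, hb, h])
        simp [flipAt, Function.update_self, ha, hb, ← zmod2_ne hab]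
      · have : c j = x j := by
          by_contra h
          exact hji ((hmem j).1 h)
        simp [flipAt, Function.update_of_ne hji, this]
  · intro hx
    rcases hx with rfl | ⟨i, hip, rfl⟩
    · exact mem_ball.2 ⟨page_isX hc, by simp⟩
    · obtain ⟨a, ha⟩ := Option.ne_none_iff_exists'.1 (fun hn => hip ((hcp i).1 hn))
      refine mem_ball.2 ⟨?_, ?_⟩
      · refine isX_iff.2 ⟨p, fun j => ?_⟩
        rcases eq_or_ne j i with rfl | hji
        · simp only [flipAt, Function.update_self, ha, Option.map_some]
          constructor
          · intro h; exact absurd h (by simp)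
          · intro h; exact absurd (h ▸ hip) (by simp [h]) 
        · rw [show flipAt c i j = c j from Function.update_of_ne hji _ _]
          exact hcp j
      · have : (Finset.univ.filter (fun j => c j ≠ flipAt c i j)) ⊆ {i} := by
          intro j hj
          simp only [Finset.mem_filter, Finset.mem_univ, true_and] at hj
          by_contra h
          simp only [Finset.mem_singleton] at h
          exact hj (Function.update_of_ne h _ _).symm
        calc hammingDist c (flipAt c i) ≤ ({i} : Finset (Fin n)).card := Finset.card_le_card this
          _ = 1 := Finset.card_singleton i

lemma Pg_unique {p q : Fin n} {w : TW n} (hp : Pg p w) (hq : Pg q w) : p = q :=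
  (hq p).1 ((hp p).2 rfl)

lemma ball_card {p : Fin n} {c : TW n} (hc : c ∈ page p) : (ball c).card = n := by
  have hcp : Pg p c := mem_page.1 hc
  rw [ball_eq hc]
  have hnotmem : c ∉ (Finset.univ.filter (· ≠ p)).image (flipAt c) := by
    intro h
    obtain ⟨i, hi, heq⟩ := Finset.mem_image.1 h
    simp only [Finset.mem_filter, Finset.mem_univ, true_and] at hi
    obtain ⟨a, ha⟩ := Option.ne_none_iff_exists'.1 (fun hn => hi ((hcp i).1 hn))
    have := congrFun heq i
    rw [flipAt, Function.update_self, ha] at this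
    simp only [Option.map_some, Option.some.injEq] at this
    exact one_ne_zero (add_left_cancel (a := a) (by rw [add_zero, this]))
  rw [Finset.card_insert_of_notMem hnotmem, Finset.card_image_of_injOn, Finset.filter_ne',
    Finset.card_erase_of_mem (Finset.mem_univ p), Finset.card_univ, Fintype.card_fin]
  · have : 0 < n := p.pos
    omega
  · intro i hi j hj hij
    simp only [Finset.coe_filter, Finset.mem_univ, true_and, Set.mem_setOf_eq] at hi hj
    by_contra hne
    obtain ⟨a, ha⟩ := Option.ne_none_iff_exists'.1 (fun hn => hi ((hcp i).1 hn))
    have h1 := congrFun hij i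
    rw [flipAt, Function.update_self, show flipAt c j i = c i from Function.update_of_ne hne _ _,
      ha] at h1
    simp only [Option.map_some, Option.some.injEq] at h1
    exact one_ne_zero (add_left_cancel (a := a) (by rw [add_zero, h1]))

end Stmt6Aux

open Stmt6Aux

/-- if `C ⊆ X^n` is a perfect distance-3 code (minimum distance 3 and
cardinality `2^(n-1)`), then `n = 2^m` for some `m ≥ 2`. -/
theorem stmt6 {n : ℕ} (C : Finset (TW n)) (hX : ∀ c ∈ C, isX c)
    (hC2 : 2 ≤ C.card)
    (hd : ∀ c ∈ C, ∀ c' ∈ C, c ≠ c' → 3 ≤ hammingDist c c')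
    (hcard : C.card = 2 ^ (n - 1)) :
    ∃ m : ℕ, 2 ≤ m ∧ n = 2 ^ m := by
  classical
  -- n ≥ 3
  obtain ⟨a, ha, b, hb, hab⟩ := Finset.one_lt_card.1 (by omega : 1 < C.card)
  have hn3 : 3 ≤ n := by
    have h1 := hd a ha b hb hab
    have h2 : hammingDist a b ≤ n := by
      simpa using hammingDist_le_card_fintype (x := a) (y := b)
    omega
  -- balls pairwise disjoint
  have hdisj : ∀ c ∈ C, ∀ c' ∈ C, c ≠ c' → Disjoint (ball c) (ball c') := by
    intro c hc c' hc' hne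
    rw [Finset.disjoint_left]
    intro x hx hx'
    have h1 := (mem_ball.1 hx).2
    have h2 := (mem_ball.1 hx').2
    have h3 := hd c hc c' hc' hne
    have h4 := hammingDist_triangle c x c'
    rw [hammingDist_comm x c'] at h4
    omega
  -- each ball has card n
  have hballcard : ∀ c ∈ C, (ball c).card = n := by
    intro c hc
    obtain ⟨p, hp⟩ := isX_iff.1 (hX c hc)
    exact ball_card (mem_page.2 hp)
  -- union of balls
  set U : Finset (TW n) := C.biUnion ball with hU
  have hUcard : U.card = 2 ^ (n - 1) * n := by
    rw [hU, Finset.card_biUnion hdisj, ← hcard]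
    rw [Finset.sum_congr rfl hballcard, Finset.sum_const, smul_eq_mul]
  -- the whole space X
  set Xf : Finset (TW n) := Finset.univ.filter isX with hXf
  have hXfcard : Xf.card = n * 2 ^ (n - 1) := by
    have heq : Xf = (Finset.univ : Finset (Fin n)).biUnion page := by
      ext w
      simp only [hXf, Finset.mem_filter, Finset.mem_univ, true_and, Finset.mem_biUnion]
      rw [isX_iff]
      constructor
      · rintro ⟨q, hq⟩; exact ⟨q, mem_page.2 hq⟩
      · rintro ⟨q, hq⟩; exact ⟨q, mem_page.1 hq⟩
    rw [heq, Finset.card_biUnion]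
    · rw [Finset.sum_congr rfl (fun p _ => page_card p), Finset.sum_const, smul_eq_mul,
        Finset.card_univ, Fintype.card_fin]
    · intro p _ q _ hpq
      rw [Function.onFun, Finset.disjoint_left]
      intro w hw hw'
      exact hpq (Pg_unique (mem_page.1 hw) (mem_page.1 hw'))
  -- U = Xf
  have hUX : U = Xf := by
    apply Finset.eq_of_subset_of_card_le
    · intro x hx
      obtain ⟨c, _, hxc⟩ := Finset.mem_biUnion.1 hx
      exact Finset.mem_filter.2 ⟨Finset.mem_univ x, (mem_ball.1 hxc).1⟩
    · rw [hUcard, hXfcard]; ring_nf; omega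
  -- restrict to page p
  set p : Fin n := ⟨0, by omega⟩ with hp
  set Cp : Finset (TW n) := C.filter (· ∈ page p) with hCp
  have hpage : page p = Cp.biUnion ball := by
    ext x
    constructor
    · intro hx
      have hxU : x ∈ U := by
        rw [hUX, hXf]
        exact Finset.mem_filter.2 ⟨Finset.mem_univ x, page_isX hx⟩
      obtain ⟨c, hc, hxc⟩ := Finset.mem_biUnion.1 hxU
      obtain ⟨q, hq⟩ := isX_iff.1 (hX c hc)
      have hcq : c ∈ page q := mem_page.2 hq
      have hxq : x ∈ page q := ball_subset_page hcq hxc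
      have : q = p := Pg_unique (mem_page.1 hxq) (mem_page.1 hx)
      subst this
      exact Finset.mem_biUnion.2 ⟨c, Finset.mem_filter.2 ⟨hc, hcq⟩, hxc⟩
    · intro hx
      obtain ⟨c, hc, hxc⟩ := Finset.mem_biUnion.1 hx
      exact ball_subset_page (Finset.mem_filter.1 hc).2 hxc
  have hdvd : n ∣ 2 ^ (n - 1) := by
    have hcount : 2 ^ (n - 1) = Cp.card * n := by
      rw [← page_card p, hpage, Finset.card_biUnion, Finset.sum_congr rfl
        (fun c hc => hballcard c (Finset.mem_filter.1 hc).1), Finset.sum_const, smul_eq_mul]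
      intro c hc c' hc' hne
      exact hdisj c (Finset.mem_filter.1 hc).1 c' (Finset.mem_filter.1 hc').1 hne
    exact ⟨Cp.card, by rw [hcount, Nat.mul_comm]⟩
  obtain ⟨m, _, rfl⟩ := (Nat.dvd_prime_pow Nat.prime_two).1 hdvd
  refine ⟨m, ?_, rfl⟩
  by_contra h
  push_neg at h
  interval_cases m <;> omega
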